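/- arXiv:1008.2795 — 3 statements merged into one kernel-verified Lean document; each statement's English description precedes it below -/
import Mathlib

section
/- Let X and Y be proper geodesic metric spaces with basepoints x₀ and y₀, and let f : X → Y be a (λ, ε)-quasi-isometric embedding with f(x₀) = y₀. Then for every n ∈ ℕ there exists m ∈ ℕ such that for all x, x' ∈ X: if there is a continuous path from x to x' staying outside the closed ball B(x₀, m), then there is a continuous path from f(x) to f(x') staying outside B(y₀, n). -/
/-- Let `X, Y` be proper geodesic metric spaces with basepoints `x₀, y₀` and let
`f : X → Y` be a `(λ, ε)`-quasi-isometric embedding with `f x₀ = y₀`.  Then for every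
`n` there is `m` such that any two points joined by a continuous path staying outside
the closed ball `B(x₀, m)` have images joined by a continuous path staying outside
`B(y₀, n)`. -/
theorem stmt_4 (X Y : Type*) [MetricSpace X] [MetricSpace Y]
    (hXproper : ∀ (x : X) (R : ℝ), IsCompact (Metric.closedBall x R))
    (hYproper : ∀ (y : Y) (R : ℝ), IsCompact (Metric.closedBall y R))
    (hXgeo : ∀ x y : X, ∃ α : ℝ → X, α 0 = x ∧ α (dist x y) = y ∧
      ∀ s ∈ Set.Icc (0 : ℝ) (dist x y), ∀ t ∈ Set.Icc (0 : ℝ) (dist x y),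
        dist (α s) (α t) = |s - t|)
    (hYgeo : ∀ x y : Y, ∃ α : ℝ → Y, α 0 = x ∧ α (dist x y) = y ∧
      ∀ s ∈ Set.Icc (0 : ℝ) (dist x y), ∀ t ∈ Set.Icc (0 : ℝ) (dist x y),
        dist (α s) (α t) = |s - t|)
    (x₀ : X) (y₀ : Y) (f : X → Y) (lam ε : ℝ) (hlam : 1 ≤ lam) (hε : 0 < ε)
    (hqi : ∀ x x' : X,
      (1 / lam) * dist (f x) (f x') - ε ≤ dist x x' ∧
        dist x x' ≤ lam * dist (f x) (f x') + ε)
    (hbase : f x₀ = y₀) :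
    ∀ n : ℕ, ∃ m : ℕ, ∀ x x' : X,
      (∃ α : ℝ → X, ContinuousOn α (Set.Icc 0 1) ∧ α 0 = x ∧ α 1 = x' ∧
        ∀ t ∈ Set.Icc (0 : ℝ) 1, α t ∉ Metric.closedBall x₀ (m : ℝ)) →
      (∃ β : ℝ → Y, ContinuousOn β (Set.Icc 0 1) ∧ β 0 = f x ∧ β 1 = f x' ∧
        ∀ t ∈ Set.Icc (0 : ℝ) 1, β t ∉ Metric.closedBall y₀ (n : ℝ)) := by
  intro n
  set D : ℝ := lam * (1 + ε) with hDdef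
  have hlam0 : (0:ℝ) < lam := lt_of_lt_of_le one_pos hlam
  have hD0 : 0 < D := by positivity
  obtain ⟨m, hm⟩ := exists_nat_gt (lam * ((n:ℝ) + D/2) + ε)
  refine ⟨m, ?_⟩
  rintro x x' ⟨α, hαc, hα0, hα1, hαm⟩
  set F : Set Y := (Metric.closedBall y₀ (n:ℝ))ᶜ with hFdef
  -- all points on the image of the path are far from y₀
  have hout : ∀ t ∈ Set.Icc (0:ℝ) 1, (n:ℝ) + D/2 < dist (f (α t)) y₀ := by
    intro t ht
    have h1 : (m:ℝ) < dist (α t) x₀ := by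
      have := hαm t ht
      simpa [Metric.mem_closedBall, not_le] using this
    have h2 := (hqi (α t) x₀).2
    rw [hbase] at h2
    nlinarith [h2, hm, h1]
  -- quasi-isometry step bound
  have hstep : ∀ a b : X, dist a b ≤ 1 → dist (f a) (f b) ≤ D := by
    intro a b hab
    have h := le_trans (hqi a b).1 hab
    have hl : lam ≠ 0 := ne_of_gt hlam0
    have h2 := mul_le_mul_of_nonneg_left h hlam0.le
    rw [mul_sub, ← mul_assoc, mul_one_div_cancel hl, one_mul, mul_one] at h2
    rw [hDdef]; nlinarith
  -- joining nearby far points by a geodesic staying in F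
  have hjoin : ∀ y y' : Y, dist y y' ≤ D → (n:ℝ) + D/2 < dist y y₀ →
      (n:ℝ) + D/2 < dist y' y₀ → JoinedIn F y y' := by
    intro y y' hd h1 h2
    obtain ⟨γ, hγ0, hγ1, hiso⟩ := hYgeo y y'
    set d := dist y y' with hdd
    have hd0 : (0:ℝ) ≤ d := dist_nonneg
    have hcont : ContinuousOn γ (Set.Icc 0 d) := by
      apply LipschitzOnWith.continuousOn (K := 1)
      apply LipschitzOnWith.of_dist_le_mul
      intro s hs t ht
      rw [hiso s hs t ht]
      simp [Real.dist_eq]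
    have hmem : ∀ s ∈ Set.Icc (0:ℝ) d, γ s ∈ F := by
      intro s hs
      simp only [hFdef, Set.mem_compl_iff, Metric.mem_closedBall, not_le]
      have hsy : dist (γ s) y = s := by
        have h := hiso s hs 0 ⟨le_refl 0, hd0⟩
        rw [hγ0] at h
        rw [h, sub_zero, abs_of_nonneg hs.1]
      have hsy' : dist (γ s) y' = d - s := by
        have h := hiso s hs d ⟨hd0, le_refl d⟩
        rw [hγ1] at h
        rw [h, abs_of_nonpos (by linarith [hs.2])]
        ring
      rcases le_or_gt s (d/2) with hc | hc
      · have htri : dist y y₀ ≤ dist y (γ s) + dist (γ s) y₀ := dist_triangle _ _ _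
        rw [dist_comm y (γ s), hsy] at htri
        linarith
      · have htri : dist y' y₀ ≤ dist y' (γ s) + dist (γ s) y₀ := dist_triangle _ _ _
        rw [dist_comm y' (γ s), hsy'] at htri
        linarith
    have hmap : ∀ t : unitInterval, (t:ℝ) * d ∈ Set.Icc (0:ℝ) d := by
      intro t
      exact ⟨mul_nonneg t.2.1 hd0, mul_le_of_le_one_left hd0 t.2.2⟩
    have hc2 : Continuous fun t : unitInterval => γ ((t:ℝ) * d) :=
      hcont.comp_continuous (continuous_subtype_val.mul continuous_const) hmap
    refine ⟨⟨⟨fun t => γ ((t:ℝ) * d), hc2⟩, ?_, ?_⟩, fun t => hmem _ (hmap t)⟩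
    · show γ (((0:unitInterval):ℝ) * d) = y
      simp [hγ0]
    · show γ (((1:unitInterval):ℝ) * d) = y'
      simp [hγ1]
  -- uniform continuity of α
  have hu := isCompact_Icc.uniformContinuousOn_of_continuous hαc
  rw [Metric.uniformContinuousOn_iff] at hu
  obtain ⟨δ, hδ0, hδ⟩ := hu 1 one_pos
  obtain ⟨N, hN⟩ := exists_nat_gt (1/δ)
  have hNr : (0:ℝ) < N := lt_trans (by positivity) hN
  have hN0 : (N:ℝ) ≠ 0 := ne_of_gt hNr
  have htmem : ∀ i : ℕ, i ≤ N → ((i:ℝ)/N) ∈ Set.Icc (0:ℝ) 1 := by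
    intro i hi
    constructor
    · positivity
    · rw [div_le_one hNr]; exact_mod_cast hi
  have hchain : ∀ i : ℕ, i ≤ N → JoinedIn F (f (α 0)) (f (α ((i:ℝ)/N))) := by
    intro i
    induction i with
    | zero =>
      intro _
      simp only [Nat.cast_zero, zero_div]
      refine JoinedIn.refl ?_
      simp only [hFdef, Set.mem_compl_iff, Metric.mem_closedBall, not_le]
      have := hout 0 ⟨le_refl 0, zero_le_one⟩
      linarith
    | succ i ih =>
      intro hi
      have hii : i ≤ N := le_trans (Nat.le_succ i) hi
      have hdist : dist ((i:ℝ)/N) (((i+1:ℕ):ℝ)/N) < δ := by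
        push_cast
        rw [Real.dist_eq]
        rw [show (i:ℝ)/N - ((i:ℝ)+1)/N = -(1/N) by ring]
        rw [abs_neg, abs_of_nonneg (by positivity)]
        have h2 : 1 < (N:ℝ) * δ := (div_lt_iff₀ hδ0).mp hN
        rw [div_lt_iff₀ hNr]
        nlinarith
      have hstepX : dist (α ((i:ℝ)/N)) (α (((i+1:ℕ):ℝ)/N)) ≤ 1 :=
        le_of_lt (hδ _ (htmem i hii) _ (htmem (i+1) hi) hdist)
      have step : JoinedIn F (f (α ((i:ℝ)/N))) (f (α (((i+1:ℕ):ℝ)/N))) := by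
        apply hjoin
        · exact hstep _ _ hstepX
        · exact hout _ (htmem i hii)
        · exact hout _ (htmem (i+1) hi)
      exact (ih hii).trans step
  have hfinal := hchain N le_rfl
  rw [div_self hN0, hα0, hα1] at hfinal
  obtain ⟨γ, hγmem⟩ := hfinal
  refine ⟨fun t => γ (Set.projIcc 0 1 zero_le_one t), ?_, ?_, ?_, ?_⟩
  · exact (γ.continuous.comp continuous_projIcc).continuousOn
  · show γ (Set.projIcc 0 1 zero_le_one 0) = f x
    rw [Set.projIcc_left]; exact γ.source
  · show γ (Set.projIcc 0 1 zero_le_one 1) = f x'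
    rw [Set.projIcc_right]; exact γ.target
  · intro t ht
    exact hγmem _
end

section
/- Let G be a group containing a subset V ⊆ G and an element g ∈ V such that gV ⊆ V, g⁻¹ ∉ V, the complement G \ V is infinite, both V \ gV and (G\V) \ g⁻¹(G\V) are finite, and both V and G \ V are almost invariant. Then g has infinite order and the cyclic subgroup ⟨g⟩ has finite index in G. -/
private lemma exists_boundary {P : ℕ → Prop} (h0 : P 0) (h : ¬ ∀ n, P n) :
    ∃ k, P k ∧ ¬ P (k + 1) := by
  by_contra hc
  push_neg at hc
  exact h (fun n => Nat.rec h0 (fun k hk => hc k hk) n)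

/-- Key algebraic step in Hopf's theorem: if `V ⊆ G`, `g ∈ V`, `gV ⊆ V`, `g⁻¹ ∉ V`,
`G \ V` is infinite, `V \ gV` and `(G\V) \ g⁻¹(G\V)` are finite, and both `V` and
`G \ V` are almost invariant, then `g` has infinite order and `⟨g⟩` has finite
index in `G`. -/
theorem stmt_6 (G : Type*) [Group G] (V : Set G) (g : G)
    (hgV : g ∈ V)
    (hsub : (fun x => g * x) '' V ⊆ V)
    (hginv : g⁻¹ ∉ V)
    (hcompl : Vᶜ.Infinite)
    (hfin1 : (V \ (fun x => g * x) '' V).Finite)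
    (hfin2 : (Vᶜ \ (fun x => g⁻¹ * x) '' Vᶜ).Finite)
    (hai : ∀ x : G, (symmDiff ((fun v => v * x) '' V) V).Finite)
    (hai' : ∀ x : G, (symmDiff ((fun v => v * x) '' Vᶜ) Vᶜ).Finite) :
    ¬IsOfFinOrder g ∧ (Subgroup.zpowers g).FiniteIndex := by
  -- step from hsub
  have hstep : ∀ y : G, y ∈ V → g * y ∈ V := fun y hy => hsub ⟨y, hy, rfl⟩
  -- positive powers are in V
  have hpow : ∀ n : ℕ, g ^ (n + 1) ∈ V := by
    intro n
    induction n with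
    | zero => simpa using hgV
    | succ k ih => rw [pow_succ' g (k + 1)]; exact hstep _ ih
  -- negative powers are not in V
  have hstep' : ∀ y : G, y ∉ V → g⁻¹ * y ∉ V := by
    intro y hy hmem
    exact hy (by simpa using hstep _ hmem)
  have hnpow : ∀ n : ℕ, (g ^ (n + 1))⁻¹ ∉ V := by
    intro n
    induction n with
    | zero => simpa using hginv
    | succ k ih =>
      have : (g ^ (k + 1 + 1))⁻¹ = g⁻¹ * (g ^ (k + 1))⁻¹ := by group
      rw [this]
      exact hstep' _ ih
  -- infinite order
  have hord : ¬IsOfFinOrder g := by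
    intro hf
    have hn : 0 < orderOf g := hf.orderOf_pos
    rcases Nat.lt_or_ge 1 (orderOf g) with h2 | h1
    swap
    · have h1 : orderOf g = 1 := by omega
      have : g = 1 := orderOf_eq_one_iff.mp h1
      exact hginv (by rw [this]; simpa [this] using hgV)
    · -- orderOf g ≥ 2, g⁻¹ = g ^ (orderOf g - 1)
      have hkey : g⁻¹ = g ^ (orderOf g - 1) := by
        have h : g * g ^ (orderOf g - 1) = 1 := by
          rw [← pow_succ']
          have he : orderOf g - 1 + 1 = orderOf g := by omega
          rw [he]
          exact pow_orderOf_eq_one g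
        exact inv_eq_of_mul_eq_one_right h
      have : g ^ (orderOf g - 1) ∈ V := by
        obtain ⟨m, hm⟩ : ∃ m, orderOf g - 1 = m + 1 :=
          ⟨orderOf g - 2, by omega⟩
        rw [hm]; exact hpow m
      exact hginv (hkey ▸ this)
  have hinj : Function.Injective fun n : ℕ => g ^ n :=
    injective_pow_iff_not_isOfFinOrder.mpr hord
  -- no element has its whole backward orbit in V
  have hW : ∀ x : G, x ∈ V → ¬ ∀ n : ℕ, (g ^ n)⁻¹ * x ∈ V := by
    intro x hx hall
    have hmem : ∀ n : ℕ, (g ^ (n + 1))⁻¹ ∈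
        symmDiff ((fun v => v * x⁻¹) '' V) V := by
      intro n
      apply Or.inl
      constructor
      · exact ⟨(g ^ (n + 1))⁻¹ * x, hall (n + 1), by group⟩
      · exact hnpow n
    have hinj' : Function.Injective fun n : ℕ => (g ^ (n + 1))⁻¹ := by
      intro a b hab
      simpa using hinj (inv_injective (by simpa using hab) : g ^ (a+1) = g ^ (b+1))
    exact (Set.infinite_of_injective_forall_mem hinj' hmem) (hai x⁻¹)
  -- no element has its whole forward orbit in Vᶜ
  have hW' : ∀ x : G, x ∉ V → ¬ ∀ n : ℕ, g ^ n * x ∉ V := by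
    intro x hx hall
    have hmem : ∀ n : ℕ, g ^ (n + 1) ∈
        symmDiff ((fun v => v * x⁻¹) '' Vᶜ) Vᶜ := by
      intro n
      apply Or.inl
      constructor
      · exact ⟨g ^ (n + 1) * x, hall (n + 1), by group⟩
      · simpa using hpow n
    have hinj' : Function.Injective fun n : ℕ => g ^ (n + 1) := by
      intro a b hab
      simpa using hinj (show g ^ (a+1) = g ^ (b+1) from hab)
    exact (Set.infinite_of_injective_forall_mem hinj' hmem) (hai' x⁻¹)
  -- decomposition
  have decomp : ∀ x : G, ∃ (m : ℤ) (y : G),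
      y ∈ (V \ (fun x => g * x) '' V) ∪ (Vᶜ \ (fun x => g⁻¹ * x) '' Vᶜ) ∧
      x = g ^ m * y := by
    intro x
    by_cases hx : x ∈ V
    · obtain ⟨k, hk, hk1⟩ := exists_boundary (P := fun n => (g ^ n)⁻¹ * x ∈ V)
        (by simpa using hx) (hW x hx)
      refine ⟨(k : ℤ), (g ^ k)⁻¹ * x, Or.inl ⟨hk, ?_⟩, by rw [zpow_natCast]; group⟩
      rintro ⟨v, hv, hveq⟩
      apply hk1
      have hveq' : g * v = (g ^ k)⁻¹ * x := hveq
      have heq : (g ^ (k + 1))⁻¹ * x = v := by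
        calc (g ^ (k + 1))⁻¹ * x = g⁻¹ * ((g ^ k)⁻¹ * x) := by group
          _ = g⁻¹ * (g * v) := by rw [hveq']
          _ = v := by group
      rw [heq]; exact hv
    · obtain ⟨k, hk, hk1⟩ := exists_boundary (P := fun n => g ^ n * x ∉ V)
        (by simpa using hx) (hW' x hx)
      refine ⟨-(k : ℤ), g ^ k * x, Or.inr ⟨hk, ?_⟩, by rw [zpow_neg, zpow_natCast]; group⟩
      rintro ⟨v, hv, hveq⟩
      apply hk1
      have hveq' : g⁻¹ * v = g ^ k * x := hveq
      have heq : g ^ (k + 1) * x = v := by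
        calc g ^ (k + 1) * x = g * (g ^ k * x) := by group
          _ = g * (g⁻¹ * v) := by rw [hveq']
          _ = v := by group
      rw [heq]; exact hv
  refine ⟨hord, ?_⟩
  -- finite quotient
  set F : Set G := (V \ (fun x => g * x) '' V) ∪ (Vᶜ \ (fun x => g⁻¹ * x) '' Vᶜ)
    with hF
  have hFfin : F.Finite := hfin1.union hfin2
  have hsurj : Function.Surjective
      (fun y : F => (QuotientGroup.mk ((y : G)⁻¹) : G ⧸ Subgroup.zpowers g)) := by
    intro q
    obtain ⟨x, rfl⟩ := QuotientGroup.mk_surjective q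
    obtain ⟨m, y, hy, hxy⟩ := decomp x⁻¹
    refine ⟨⟨y, hy⟩, ?_⟩
    have hx : x = y⁻¹ * g ^ (-m) := by
      have := congrArg (·⁻¹) hxy
      simpa [mul_inv_rev, zpow_neg] using this
    simp only []
    rw [QuotientGroup.eq]
    rw [hx]
    simpa using Subgroup.zpow_mem (Subgroup.zpowers g) (Subgroup.mem_zpowers g) (-m)
  have : Finite F := hFfin
  have : Finite (G ⧸ Subgroup.zpowers g) := Finite.of_surjective _ hsurj
  exact Subgroup.finiteIndex_of_finite_quotient
end

section
/- Let Γ be a group of automorphisms of ℤ (acting as isometries x ↦ ±x + k) that contains an orientation-reversing element g (i.e., g(x) = −x + c for some c) and a translation h of minimal positive translation distance among the translations in Γ, and suppose every element of Γ is either a translation or orientation-reversing. If Γ is generated by g and g·h, then the natural surjection ⟨g⟩ * ⟨gh⟩ → Γ from the free product of the cyclic groups generated by g and gh is injective, so Γ ≅ ℤ₂ * ℤ₂. -/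
open Monoid Coprod

private lemma zpowers_cases' {G : Type*} [Group G] {g : G} (hg : g * g = 1)
    (x : Subgroup.zpowers g) : x = 1 ∨ x = ⟨g, Subgroup.mem_zpowers g⟩ := by
  obtain ⟨n, hn⟩ := Subgroup.mem_zpowers_iff.mp x.2
  have h2 : g ^ (2 : ℤ) = 1 := by rw [zpow_two, hg]
  rcases Int.even_or_odd n with ⟨k, hk⟩ | ⟨k, hk⟩
  · left
    apply Subtype.ext
    have : g ^ n = 1 := by
      rw [hk, show k + k = 2 * k by ring, zpow_mul, h2, one_zpow]
    rw [← hn, this]; rfl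
  · right
    apply Subtype.ext
    have : g ^ n = g := by
      rw [hk, zpow_add, zpow_mul, h2, one_zpow, one_mul, zpow_one]
    rw [← hn, this]

private lemma coprod_form' {A B : Type*} [Group A] [Group B] (a : A) (b : B)
    (ha : a * a = 1) (hb : b * b = 1)
    (hA : ∀ x : A, x = 1 ∨ x = a) (hB : ∀ y : B, y = 1 ∨ y = b)
    (w : Monoid.Coprod A B) :
    ∃ n : ℤ, w = (Monoid.Coprod.inl a * Monoid.Coprod.inr b) ^ n ∨
      w = (Monoid.Coprod.inl a * Monoid.Coprod.inr b) ^ n * Monoid.Coprod.inl a := by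
  set α := (Monoid.Coprod.inl a : Monoid.Coprod A B) with hαdef
  set β := (Monoid.Coprod.inr b : Monoid.Coprod A B) with hβdef
  have hα : α * α = 1 := by rw [hαdef, ← map_mul, ha, map_one]
  have hβ : β * β = 1 := by rw [hβdef, ← map_mul, hb, map_one]
  have hαinv : α⁻¹ = α := inv_eq_of_mul_eq_one_right hα
  have hβinv : β⁻¹ = β := inv_eq_of_mul_eq_one_right hβ
  set t := α * β with ht
  have h1 : α * t * α⁻¹ = t⁻¹ := by
    rw [hαinv, ht, mul_inv_rev, hαinv, hβinv, ← mul_assoc, hα, one_mul]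
  have key : ∀ n : ℤ, α * t ^ n = t ^ (-n) * α := by
    intro n
    have h2 : α * t ^ n * α⁻¹ = t ^ (-n) := by
      rw [← conj_zpow, h1, inv_zpow']
    exact mul_inv_eq_iff_eq_mul.mp h2
  have hβα : β = α * t := by rw [ht, ← mul_assoc, hα, one_mul]
  induction w using Monoid.Coprod.induction_on' with
  | one => exact ⟨0, Or.inl (by simp)⟩
  | inl_mul x w ih =>
    obtain ⟨n, hn | hn⟩ := ih <;> rcases hA x with rfl | rfl
    · exact ⟨n, Or.inl (by rw [hn, map_one, one_mul])⟩
    · exact ⟨-n, Or.inr (by rw [hn, ← hαdef, key])⟩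
    · exact ⟨n, Or.inr (by rw [hn, map_one, one_mul])⟩
    · refine ⟨-n, Or.inl ?_⟩
      rw [hn, ← hαdef, ← mul_assoc, key, mul_assoc, hα, mul_one]
  | inr_mul y w ih =>
    obtain ⟨n, hn | hn⟩ := ih <;> rcases hB y with rfl | rfl
    · exact ⟨n, Or.inl (by rw [hn, map_one, one_mul])⟩
    · refine ⟨-(n + 1), Or.inr ?_⟩
      rw [hn, ← hβdef, hβα, mul_assoc, ← zpow_one_add, key]
      congr 1
      ring
    · exact ⟨n, Or.inr (by rw [hn, map_one, one_mul])⟩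
    · refine ⟨-(n + 1), Or.inl ?_⟩
      rw [hn, ← hβdef, hβα, ← mul_assoc, mul_assoc α, ← zpow_one_add, key,
        mul_assoc, hα, mul_one]
      congr 1
      ring

/-- Let `Γ` be a group of automorphisms of the simplicial line `ℤ` (each element a
translation or orientation-reversing), containing an orientation-reversing element `g`
and a translation `h` of minimal positive translation distance among translations of `Γ`,
and generated by `g` and `g·h`.  Then the natural map `⟨g⟩ ∗ ⟨gh⟩ → Γ` from the free
product is injective, so `Γ ≅ ℤ₂ ∗ ℤ₂`. -/
theorem stmt_10 (Γ : Subgroup (Equiv.Perm ℤ))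
    (helts : ∀ f ∈ Γ, (∃ k : ℤ, ∀ x : ℤ, f x = x + k) ∨ (∃ c : ℤ, ∀ x : ℤ, f x = -x + c))
    (g : Equiv.Perm ℤ) (hg : g ∈ Γ) (c : ℤ) (hgc : ∀ x : ℤ, g x = -x + c)
    (h : Equiv.Perm ℤ) (hh : h ∈ Γ) (m : ℤ) (hhm : ∀ x : ℤ, h x = x + m) (hm : 0 < |m|)
    (hmin : ∀ f ∈ Γ, ∀ m' : ℤ, (∀ x : ℤ, f x = x + m') → m' ≠ 0 → |m| ≤ |m'|)
    (hgen : Γ = Subgroup.closure {g, g * h}) :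
    Function.Injective
      (Monoid.Coprod.lift (Subgroup.zpowers g).subtype (Subgroup.zpowers (g * h)).subtype) ∧
    Nonempty (Γ ≃* Monoid.Coprod (Multiplicative (ZMod 2)) (Multiplicative (ZMod 2))) := by
  have hmne : m ≠ 0 := by
    intro h0; rw [h0] at hm; simp at hm
  have hgg : g * g = 1 := by
    ext x
    rw [Equiv.Perm.mul_apply, hgc, hgc, Equiv.Perm.one_apply]
    ring
  have hbc : ∀ x : ℤ, (g * h) x = -x + (c - m) := by
    intro x
    rw [Equiv.Perm.mul_apply, hhm, hgc]
    ring
  have hbb : (g * h) * (g * h) = 1 := by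
    ext x
    rw [Equiv.Perm.mul_apply, hbc, hbc, Equiv.Perm.one_apply]
    ring
  have hgne : g ≠ 1 := by
    intro e
    have h0 := hgc 0
    have h1 := hgc 1
    rw [e, Equiv.Perm.one_apply] at h0 h1
    omega
  have hbne : g * h ≠ 1 := by
    intro e
    have h0 := hbc 0
    have h1 := hbc 1
    rw [e, Equiv.Perm.one_apply] at h0 h1
    omega
  have hinvh : ∀ x : ℤ, h⁻¹ x = x - m := by
    intro x
    apply h.injective
    rw [← Equiv.Perm.mul_apply, mul_inv_cancel, Equiv.Perm.one_apply, hhm]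
    ring
  have hpow : ∀ n : ℤ, ∀ x : ℤ, (h ^ n) x = x + n * m := by
    intro n
    induction n using Int.induction_on with
    | zero => simp
    | succ k ih =>
      intro x
      rw [zpow_add_one, Equiv.Perm.mul_apply, hhm, ih]
      push_cast
      ring
    | pred k ih =>
      intro x
      rw [zpow_sub_one, Equiv.Perm.mul_apply, hinvh, ih]
      push_cast
      ring
  set A := Subgroup.zpowers g with hAdef
  set B := Subgroup.zpowers (g * h) with hBdef
  set φ := Monoid.Coprod.lift A.subtype B.subtype with hφdef
  set a' : A := ⟨g, Subgroup.mem_zpowers g⟩ with ha'def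
  set b' : B := ⟨g * h, Subgroup.mem_zpowers (g * h)⟩ with hb'def
  have ha' : a' * a' = 1 := Subtype.ext hgg
  have hb' : b' * b' = 1 := Subtype.ext hbb
  have form := coprod_form' a' b' ha' hb' (zpowers_cases' hgg) (zpowers_cases' hbb)
  set t := Monoid.Coprod.inl a' * Monoid.Coprod.inr b' with htdef
  have hφt : φ t = h := by
    rw [htdef, map_mul, hφdef, Monoid.Coprod.lift_apply_inl, Monoid.Coprod.lift_apply_inr]
    show g * (g * h) = h
    rw [← mul_assoc, hgg, one_mul]
  have hφa : φ (Monoid.Coprod.inl a') = g := by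
    rw [hφdef, Monoid.Coprod.lift_apply_inl]; rfl
  have keyt : ∀ n : ℤ, ∀ x : ℤ, φ (t ^ n) x = x + n * m := by
    intro n x
    rw [map_zpow, hφt, hpow]
  have keya : ∀ n : ℤ, ∀ x : ℤ, φ (t ^ n * Monoid.Coprod.inl a') x = -x + c + n * m := by
    intro n x
    rw [map_mul, Equiv.Perm.mul_apply, hφa, hgc, map_zpow, hφt, hpow]
  have hinj : Function.Injective φ := by
    intro u v huv
    obtain ⟨p, hp | hp⟩ := form u <;> obtain ⟨q, hq | hq⟩ := form v <;> subst hp hq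
    · have e0 : φ (t ^ p) 0 = φ (t ^ q) 0 := by rw [huv]
      rw [keyt, keyt] at e0
      have : p = q := by
        have := mul_right_cancel₀ hmne (by omega : p * m = q * m)
        exact this
      rw [this]
    · have e0 : φ (t ^ p) 0 = φ (t ^ q * Monoid.Coprod.inl a') 0 := by rw [huv]
      have e1 : φ (t ^ p) 1 = φ (t ^ q * Monoid.Coprod.inl a') 1 := by rw [huv]
      rw [keyt, keya] at e0
      rw [keyt, keya] at e1
      omega
    · have e0 : φ (t ^ p * Monoid.Coprod.inl a') 0 = φ (t ^ q) 0 := by rw [huv]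
      have e1 : φ (t ^ p * Monoid.Coprod.inl a') 1 = φ (t ^ q) 1 := by rw [huv]
      rw [keya, keyt] at e0
      rw [keya, keyt] at e1
      omega
    · have e0 : φ (t ^ p * Monoid.Coprod.inl a') 0 = φ (t ^ q * Monoid.Coprod.inl a') 0 := by
        rw [huv]
      rw [keya, keya] at e0
      have : p = q := mul_right_cancel₀ hmne (by omega : p * m = q * m)
      rw [this]
  refine ⟨hinj, ?_⟩
  have hrange : φ.range = Γ := by
    rw [hφdef, Monoid.Coprod.range_lift, Subgroup.range_subtype, Subgroup.range_subtype,
      hgen, hAdef, hBdef, Subgroup.zpowers_eq_closure, Subgroup.zpowers_eq_closure,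
      ← Subgroup.closure_union, Set.singleton_union]
  have cardA : Nat.card A = 2 := by
    rw [hAdef, Nat.card_zpowers]
    exact orderOf_eq_prime (by rw [pow_two, hgg]) hgne
  have cardB : Nat.card B = 2 := by
    rw [hBdef, Nat.card_zpowers]
    exact orderOf_eq_prime (by rw [pow_two, hbb]) hbne
  have card2 : Nat.card (Multiplicative (ZMod 2)) = 2 := by
    rw [Nat.card_congr Multiplicative.toAdd, Nat.card_zmod]
  have eA : A ≃* Multiplicative (ZMod 2) := mulEquivOfPrimeCardEq cardA card2
  have eB : B ≃* Multiplicative (ZMod 2) := mulEquivOfPrimeCardEq cardB card2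
  exact ⟨((MulEquiv.subgroupCongr hrange).symm.trans
      (MonoidHom.ofInjective hinj).symm).trans (MulEquiv.coprodCongr eA eB)⟩
end
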